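/- Let G be a simple graph with labelling λ : V(G) → ℕ. If the 1-skeleton of the bounded degree complex BD^λ(G) contains two edges {e₁,e₂} and {f₁,f₂} with e₁ and f₁ lying in distinct connected components of BD^λ(G), then G contains a cycle of length 4; in particular, each eᵢ ∩ fⱼ is nonempty and {e₁,e₂}, {f₁,f₂} are two distinct perfect matchings on the same four vertices. -/

import Mathlib

open Finset

/-- Degree of a vertex `v` in a finite set `H` of edges. -/
def edgeDeg {V : Type*} [DecidableEq V] (H : Finset (Sym2 V)) (v : V) : ℕ :=
  (H.filter (fun e => v ∈ e)).card

/-- The bounded degree complex `BD^λ(G)`: its faces are the finite sets `H` of edges of `G`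
such that every vertex `v` lies on at most `lam v` edges of `H`. -/
def BD {V : Type*} [DecidableEq V] (G : SimpleGraph V) (lam : V → ℕ) :
    Set (Finset (Sym2 V)) :=
  {H | ↑H ⊆ G.edgeSet ∧ ∀ v, edgeDeg H v ≤ lam v}

/-- The 1-skeleton of `BD^λ(G)`, as a graph on `Sym2 V`: two edges of `G` are adjacent when the
pair is a face of the bounded degree complex. -/
def bdAdjGraph {V : Type*} [DecidableEq V] (G : SimpleGraph V) (lam : V → ℕ) :
    SimpleGraph (Sym2 V) where
  Adj e f := e ≠ f ∧ ({e, f} : Finset (Sym2 V)) ∈ BD G lam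
  symm := by
    constructor
    intro e f h
    refine ⟨h.1.symm, ?_⟩
    rw [Finset.pair_comm]
    exact h.2
  loopless := ⟨fun e h => h.1 rfl⟩

lemma lam_pos {V : Type*} [DecidableEq V] {G : SimpleGraph V} {lam : V → ℕ}
    {H : Finset (Sym2 V)} (hH : H ∈ BD G lam) {e : Sym2 V} (he : e ∈ H)
    {v : V} (hv : v ∈ e) : 1 ≤ lam v := by
  have h := hH.2 v
  have hmem : e ∈ H.filter (fun e => v ∈ e) := Finset.mem_filter.mpr ⟨he, hv⟩
  have : 0 < edgeDeg H v := Finset.card_pos.mpr ⟨e, hmem⟩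
  omega

lemma noshare {V : Type*} [DecidableEq V] {G : SimpleGraph V} {lam : V → ℕ}
    {e f : Sym2 V} (hBD : ({e, f} : Finset (Sym2 V)) ∈ BD G lam) (hef : e ≠ f)
    {v : V} (hve : v ∈ e) (hvf : v ∈ f) (hlam : lam v ≤ 1) : False := by
  have h := hBD.2 v
  have hfil : ({e, f} : Finset (Sym2 V)).filter (fun g => v ∈ g) = {e, f} := by
    apply Finset.filter_true_of_mem
    intro g hg
    rcases Finset.mem_insert.mp hg with rfl | hg
    · exact hve
    · rw [Finset.mem_singleton.mp hg]; exact hvf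
  have h2 : edgeDeg {e, f} v = 2 := by
    rw [edgeDeg, hfil, Finset.card_pair hef]
  omega

lemma shared {V : Type*} [DecidableEq V] {G : SimpleGraph V} {lam : V → ℕ}
    {e f : Sym2 V} (heG : e ∈ G.edgeSet) (hfG : f ∈ G.edgeSet)
    (hef : e ≠ f)
    (hle : ∀ v ∈ e, 1 ≤ lam v) (hlf : ∀ v ∈ f, 1 ≤ lam v)
    (hna : ¬ (bdAdjGraph G lam).Adj e f) :
    ∃ v, v ∈ e ∧ v ∈ f ∧ lam v ≤ 1 := by
  have hnBD : ({e, f} : Finset (Sym2 V)) ∉ BD G lam := fun h => hna ⟨hef, h⟩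
  have hsub : ↑({e, f} : Finset (Sym2 V)) ⊆ G.edgeSet := by
    intro g hg
    simp only [coe_insert, coe_singleton, Set.mem_insert_iff, Set.mem_singleton_iff] at hg
    rcases hg with rfl | rfl <;> assumption
  obtain ⟨v, hv⟩ : ∃ v, ¬ edgeDeg {e, f} v ≤ lam v := by
    by_contra h
    push_neg at h
    exact hnBD ⟨hsub, h⟩
  push_neg at hv
  have hle2 : edgeDeg {e, f} v ≤ 2 := by
    have h1 := Finset.card_le_card (Finset.filter_subset (fun g => v ∈ g) ({e, f} : Finset (Sym2 V)))
    have h2 : ({e, f} : Finset (Sym2 V)).card = 2 := Finset.card_pair hef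
    rw [edgeDeg]; omega
  have hve : v ∈ e := by
    by_contra hvne
    have hsub1 : ({e, f} : Finset (Sym2 V)).filter (fun g => v ∈ g) ⊆ {f} := by
      intro g hg
      simp only [Finset.mem_filter, Finset.mem_insert, Finset.mem_singleton] at hg ⊢
      rcases hg.1 with rfl | rfl
      · exact absurd hg.2 hvne
      · rfl
    have hle1 : edgeDeg {e, f} v ≤ 1 := by
      have := Finset.card_le_card hsub1
      simpa [edgeDeg] using this
    have hpos : 0 < edgeDeg {e, f} v := by omega
    obtain ⟨g, hg⟩ := Finset.card_pos.mp hpos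
    have hg' := Finset.mem_filter.mp hg
    rcases Finset.mem_insert.mp hg'.1 with rfl | hgf
    · exact hvne hg'.2
    · have hvf : v ∈ f := by rw [← Finset.mem_singleton.mp hgf]; exact hg'.2
      have := hlf v hvf; omega
  have hvf : v ∈ f := by
    by_contra hvnf
    have hsub1 : ({e, f} : Finset (Sym2 V)).filter (fun g => v ∈ g) ⊆ {e} := by
      intro g hg
      simp only [Finset.mem_filter, Finset.mem_insert, Finset.mem_singleton] at hg ⊢
      rcases hg.1 with rfl | rfl
      · rfl
      · exact absurd hg.2 hvnf
    have hle1 : edgeDeg {e, f} v ≤ 1 := by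
      have := Finset.card_le_card hsub1
      simpa [edgeDeg] using this
    have := hle v hve; omega
  exact ⟨v, hve, hvf, by omega⟩

/-- if the 1-skeleton of `BD^λ(G)` has two edges `{e₁,e₂}` and `{f₁,f₂}` with `e₁`
and `f₁` in distinct connected components, then `G` contains a 4-cycle; in particular each
`eᵢ ∩ fⱼ` is nonempty and `{e₁,e₂}`, `{f₁,f₂}` are distinct perfect matchings on the same four
vertices. -/
theorem BD_two_components_square {V : Type*} [DecidableEq V]
    (G : SimpleGraph V) (lam : V → ℕ) (e₁ e₂ f₁ f₂ : Sym2 V)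
    (he : e₁ ≠ e₂) (heBD : ({e₁, e₂} : Finset (Sym2 V)) ∈ BD G lam)
    (hf : f₁ ≠ f₂) (hfBD : ({f₁, f₂} : Finset (Sym2 V)) ∈ BD G lam)
    (hsep : ¬ (bdAdjGraph G lam).Reachable e₁ f₁) :
    (∃ a b c d : V, a ≠ b ∧ a ≠ c ∧ a ≠ d ∧ b ≠ c ∧ b ≠ d ∧ c ≠ d ∧
      G.Adj a b ∧ G.Adj b c ∧ G.Adj c d ∧ G.Adj d a) ∧
    (∃ x, x ∈ e₁ ∧ x ∈ f₁) ∧ (∃ x, x ∈ e₁ ∧ x ∈ f₂) ∧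
    (∃ x, x ∈ e₂ ∧ x ∈ f₁) ∧ (∃ x, x ∈ e₂ ∧ x ∈ f₂) ∧
    (∀ x, ¬(x ∈ e₁ ∧ x ∈ e₂)) ∧ (∀ x, ¬(x ∈ f₁ ∧ x ∈ f₂)) ∧
    ({e₁, e₂} : Finset (Sym2 V)) ≠ {f₁, f₂} ∧
    {x | x ∈ e₁ ∨ x ∈ e₂} = {x | x ∈ f₁ ∨ x ∈ f₂} := by
  classical
  have he1G : e₁ ∈ G.edgeSet := heBD.1 (by simp)
  have he2G : e₂ ∈ G.edgeSet := heBD.1 (by simp)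
  have hf1G : f₁ ∈ G.edgeSet := hfBD.1 (by simp)
  have hf2G : f₂ ∈ G.edgeSet := hfBD.1 (by simp)
  have hle1 : ∀ v ∈ e₁, 1 ≤ lam v := fun v hv => lam_pos heBD (by simp) hv
  have hle2 : ∀ v ∈ e₂, 1 ≤ lam v := fun v hv => lam_pos heBD (by simp) hv
  have hlf1 : ∀ v ∈ f₁, 1 ≤ lam v := fun v hv => lam_pos hfBD (by simp) hv
  have hlf2 : ∀ v ∈ f₂, 1 ≤ lam v := fun v hv => lam_pos hfBD (by simp) hv
  have hAe : (bdAdjGraph G lam).Adj e₁ e₂ := ⟨he, heBD⟩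
  have hAf : (bdAdjGraph G lam).Adj f₁ f₂ := ⟨hf, hfBD⟩
  have hre : (bdAdjGraph G lam).Reachable e₁ e₂ := hAe.reachable
  have hrf : (bdAdjGraph G lam).Reachable f₂ f₁ := hAf.symm.reachable
  have key : ∀ g h : Sym2 V, (bdAdjGraph G lam).Reachable e₁ g →
      (bdAdjGraph G lam).Reachable h f₁ →
      g ≠ h ∧ ¬ (bdAdjGraph G lam).Adj g h := by
    intro g h hg hh
    constructor
    · rintro rfl; exact hsep (hg.trans hh)
    · intro hadj; exact hsep (hg.trans (hadj.reachable.trans hh))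
  have k11 := key e₁ f₁ (SimpleGraph.Reachable.refl _) (SimpleGraph.Reachable.refl _)
  have k12 := key e₁ f₂ (SimpleGraph.Reachable.refl _) hrf
  have k21 := key e₂ f₁ hre (SimpleGraph.Reachable.refl _)
  have k22 := key e₂ f₂ hre hrf
  obtain ⟨a, ha1, haf1, hla⟩ := shared he1G hf1G k11.1 hle1 hlf1 k11.2
  obtain ⟨b, hb1, hbf2, hlb⟩ := shared he1G hf2G k12.1 hle1 hlf2 k12.2
  obtain ⟨d, hd2, hdf1, hld⟩ := shared he2G hf1G k21.1 hle2 hlf1 k21.2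
  obtain ⟨c, hc2, hcf2, hlc⟩ := shared he2G hf2G k22.1 hle2 hlf2 k22.2
  have hab : a ≠ b := fun h => noshare hfBD hf haf1 (by rw [h]; exact hbf2) hla
  have hac : a ≠ c := fun h => noshare heBD he ha1 (by rw [h]; exact hc2) hla
  have had : a ≠ d := fun h => noshare heBD he ha1 (by rw [h]; exact hd2) hla
  have hbc : b ≠ c := fun h => noshare heBD he hb1 (by rw [h]; exact hc2) hlb
  have hbd : b ≠ d := fun h => noshare heBD he hb1 (by rw [h]; exact hd2) hlb
  have hcd : c ≠ d := fun h => noshare hfBD hf (by rw [h]; exact hdf1) hcf2 hlc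
  have he1eq : e₁ = s(a, b) := (Sym2.mem_and_mem_iff hab).mp ⟨ha1, hb1⟩
  have he2eq : e₂ = s(c, d) := (Sym2.mem_and_mem_iff hcd).mp ⟨hc2, hd2⟩
  have hf1eq : f₁ = s(d, a) := (Sym2.mem_and_mem_iff had.symm).mp ⟨hdf1, haf1⟩
  have hf2eq : f₂ = s(b, c) := (Sym2.mem_and_mem_iff hbc).mp ⟨hbf2, hcf2⟩
  have Gab : G.Adj a b := (SimpleGraph.mem_edgeSet G).mp (he1eq ▸ he1G)
  have Gcd : G.Adj c d := (SimpleGraph.mem_edgeSet G).mp (he2eq ▸ he2G)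
  have Gda : G.Adj d a := (SimpleGraph.mem_edgeSet G).mp (hf1eq ▸ hf1G)
  have Gbc : G.Adj b c := (SimpleGraph.mem_edgeSet G).mp (hf2eq ▸ hf2G)
  refine ⟨⟨a, b, c, d, hab, hac, had, hbc, hbd, hcd, Gab, Gbc, Gcd, Gda⟩,
    ⟨a, ha1, haf1⟩, ⟨b, hb1, hbf2⟩, ⟨d, hd2, hdf1⟩, ⟨c, hc2, hcf2⟩, ?_, ?_, ?_, ?_⟩
  · rintro x ⟨hx1, hx2⟩
    rw [he1eq, Sym2.mem_iff] at hx1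
    rw [he2eq, Sym2.mem_iff] at hx2
    rcases hx1 with rfl | rfl <;> rcases hx2 with h | h
    · exact hac h
    · exact had h
    · exact hbc h
    · exact hbd h
  · rintro x ⟨hx1, hx2⟩
    rw [hf1eq, Sym2.mem_iff] at hx1
    rw [hf2eq, Sym2.mem_iff] at hx2
    rcases hx1 with rfl | rfl <;> rcases hx2 with h | h
    · exact hbd h.symm
    · exact hcd h.symm
    · exact hab h
    · exact hac h
  · intro hset
    have hmem : e₁ ∈ ({f₁, f₂} : Finset (Sym2 V)) := by
      rw [← hset]; exact Finset.mem_insert_self _ _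
    rcases Finset.mem_insert.mp hmem with h | h
    · exact k11.1 h
    · exact k12.1 (Finset.mem_singleton.mp h)
  · ext x
    simp only [Set.mem_setOf_eq, he1eq, he2eq, hf1eq, hf2eq, Sym2.mem_iff]
    tauto
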